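/- arXiv:2312.17519 — 2 statements merged into one kernel-verified Lean document; each statement's English description precedes it below -/
import Mathlib

section
/- If e ∈ E is a loop of the set system D = (E, Φ) (i.e., e belongs to no admissible set), then the two-variable interlace polynomial satisfies L̄_D(x, y) = (1 + x y) · L̄_{D\e}(x, y), where D\e = (E \ {e}, Φ). -/
open Finset

/-- Distance from a subset `U` to a nonempty set system `Φ`. -/
def setSystemDist {α : Type*} [DecidableEq α] (Φ : Finset (Finset α)) (hΦ : Φ.Nonempty)
    (U : Finset α) : ℕ :=
  Φ.inf' hΦ fun φ => (symmDiff U φ).card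

lemma inf'_add_one {β : Type*} {s : Finset β} (hs : s.Nonempty) (f : β → ℕ) :
    s.inf' hs (fun b => f b + 1) = s.inf' hs f + 1 := by
  apply le_antisymm
  · obtain ⟨b, hb, hfb⟩ := Finset.exists_mem_eq_inf' hs f
    calc s.inf' hs (fun b => f b + 1) ≤ f b + 1 := Finset.inf'_le _ hb
    _ = s.inf' hs f + 1 := by rw [hfb]
  · rw [Finset.le_inf'_iff]
    intro b hb
    exact Nat.add_le_add_right (Finset.inf'_le _ hb) 1

lemma dist_insert {α : Type*} [DecidableEq α] (Φ : Finset (Finset α)) (hΦ : Φ.Nonempty)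
    (e : α) (hloop : ∀ φ ∈ Φ, e ∉ φ) (U : Finset α) (heU : e ∉ U) :
    setSystemDist Φ hΦ (insert e U) = setSystemDist Φ hΦ U + 1 := by
  unfold setSystemDist
  rw [← inf'_add_one hΦ]
  apply Finset.inf'_congr hΦ rfl
  intro φ hφ
  have heφ : e ∉ φ := hloop φ hφ
  have h1 : symmDiff (insert e U) φ = insert e (symmDiff U φ) := by
    ext a
    simp only [Finset.mem_symmDiff, Finset.mem_insert]
    by_cases ha : a = e
    · subst ha; simp [heU, heφ]
    · tauto
  rw [h1, Finset.card_insert_of_notMem]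
  simp [Finset.mem_symmDiff, heU, heφ]

/-- If `e` is a loop of the set system `D = (E, Φ)` (it belongs to no admissible set),
then `L̄_D(x, y) = (1 + x·y) · L̄_{D\e}(x, y)`, where `D\e = (E \ {e}, Φ)`. -/
theorem interlaceTwo_loop {α : Type*} [DecidableEq α] (E : Finset α)
    (Φ : Finset (Finset α)) (hΦ : Φ.Nonempty) (hsub : ∀ φ ∈ Φ, φ ⊆ E)
    (e : α) (he : e ∈ E) (hloop : ∀ φ ∈ Φ, e ∉ φ) (x y : ℤ) :
    ∑ U ∈ E.powerset, x ^ U.card * y ^ setSystemDist Φ hΦ U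
      = (1 + x * y) *
          ∑ U ∈ (E.erase e).powerset, x ^ U.card * y ^ setSystemDist Φ hΦ U := by
  have hE : E = insert e (E.erase e) := (Finset.insert_erase he).symm
  have hee : e ∉ E.erase e := Finset.notMem_erase e E
  rw [hE, Finset.sum_powerset_insert hee]
  have : ∑ U ∈ (E.erase e).powerset,
      x ^ (insert e U).card * y ^ setSystemDist Φ hΦ (insert e U)
      = (x * y) * ∑ U ∈ (E.erase e).powerset, x ^ U.card * y ^ setSystemDist Φ hΦ U := by
    rw [Finset.mul_sum]
    apply Finset.sum_congr rfl
    intro U hU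
    have heU : e ∉ U := fun h => hee (Finset.mem_powerset.mp hU h)
    rw [Finset.card_insert_of_notMem heU, dist_insert Φ hΦ e hloop U heU]
    ring
  rw [this, Finset.erase_insert hee]
  ring
end

section
/- If e ∈ E is a coloop of the set system D = (E, Φ) (i.e., e belongs to every admissible set), then the two-variable interlace polynomial satisfies L̄_D(x, y) = (x + y) · L̄_{D*e\e}(x, y), where D*e\e is the set system on E\{e} whose admissible sets are {φ \ {e} : φ ∈ Φ}. -/
open Finset

lemma symmDiff_erase_mem {α : Type*} [DecidableEq α] {U φ : Finset α} {e : α}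
    (heU : e ∉ U) (heφ : e ∈ φ) :
    symmDiff U φ = insert e (symmDiff U (φ.erase e)) := by
  ext a
  by_cases ha : a = e <;>
    simp [Finset.mem_symmDiff, ha, heU, heφ, Finset.mem_erase]

lemma symmDiff_insert_eq {α : Type*} [DecidableEq α] {U φ : Finset α} {e : α}
    (heU : e ∉ U) (heφ : e ∈ φ) :
    symmDiff (insert e U) φ = symmDiff U (φ.erase e) := by
  ext a
  by_cases ha : a = e <;>
    simp [Finset.mem_symmDiff, ha, heU, heφ, Finset.mem_erase]

/-- If `e` is a coloop of the set system `D = (E, Φ)` (it belongs to every admissible set),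
then `L̄_D(x, y) = (x + y) · L̄_{D*e\e}(x, y)`, where `D*e\e` is the set system on
`E \ {e}` with admissible sets `{φ \ {e} : φ ∈ Φ}`. -/
theorem interlaceTwo_coloop {α : Type*} [DecidableEq α] (E : Finset α)
    (Φ : Finset (Finset α)) (hΦ : Φ.Nonempty) (hsub : ∀ φ ∈ Φ, φ ⊆ E)
    (e : α) (he : e ∈ E) (hcoloop : ∀ φ ∈ Φ, e ∈ φ) (x y : ℤ) :
    ∑ U ∈ E.powerset, x ^ U.card * y ^ setSystemDist Φ hΦ U
      = (x + y) *
          ∑ U ∈ (E.erase e).powerset,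
            x ^ U.card * y ^ setSystemDist (Φ.image fun φ => φ.erase e) (hΦ.image _) U := by
  have hne : e ∉ E.erase e := Finset.notMem_erase e E
  have hdist' : ∀ U : Finset α,
      setSystemDist (Φ.image fun φ => φ.erase e) (hΦ.image _) U
        = Φ.inf' hΦ fun φ => (symmDiff U (φ.erase e)).card := by
    intro U
    simp [setSystemDist, Finset.inf'_image, Function.comp]
  have key1 : ∀ U ∈ (E.erase e).powerset,
      setSystemDist Φ hΦ U
        = setSystemDist (Φ.image fun φ => φ.erase e) (hΦ.image _) U + 1 := by
    intro U hU
    have heU : e ∉ U := fun h => hne (Finset.mem_powerset.mp hU h)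
    rw [hdist', setSystemDist,
      Finset.apply_inf'_eq_inf'_comp (g := fun n => n + 1) hΦ
        (fun a b => by simp [min_add_add_right])]
    apply Finset.inf'_congr _ rfl
    intro φ hφ
    rw [symmDiff_erase_mem heU (hcoloop φ hφ),
      Finset.card_insert_of_notMem (by simp [Finset.mem_symmDiff, heU])]
    rfl
  have key2 : ∀ U ∈ (E.erase e).powerset,
      setSystemDist Φ hΦ (insert e U)
        = setSystemDist (Φ.image fun φ => φ.erase e) (hΦ.image _) U := by
    intro U hU
    have heU : e ∉ U := fun h => hne (Finset.mem_powerset.mp hU h)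
    rw [hdist', setSystemDist]
    apply Finset.inf'_congr _ rfl
    intro φ hφ
    rw [symmDiff_insert_eq heU (hcoloop φ hφ)]
  conv_lhs => rw [← Finset.insert_erase he]
  rw [Finset.sum_powerset_insert hne]
  rw [add_mul, add_comm (x * _) (y * _)]
  congr 1
  · rw [Finset.mul_sum]
    apply Finset.sum_congr rfl
    intro U hU
    rw [key1 U hU, pow_succ]
    ring
  · rw [Finset.mul_sum]
    apply Finset.sum_congr rfl
    intro U hU
    have heU : e ∉ U := fun h => hne (Finset.mem_powerset.mp hU h)
    rw [key2 U hU, Finset.card_insert_of_notMem heU, pow_succ]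
    ring
end
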